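/- Let k, l, m be natural numbers and let f : PEquiv (Fin k) (Fin l) and g : PEquiv (Fin l) (Fin m) be monotone partial equivalences. Then the composite partial equivalence f.trans g : PEquiv (Fin k) (Fin m) is monotone. (Diagrammatically: the composition of two planar rook diagrams is, up to a power of the parameter t, again a planar rook diagram.) -/
import Mathlib


/-- A rook matrix: every entry is 0 or 1, and there is at most one entry
equal to 1 in each row and in each column. -/
def IsRookMatrix {l k : ℕ} {R : Type*} [CommRing R]
    (A : Matrix (Fin l) (Fin k) R) : Prop :=
  (∀ i j, A i j = 0 ∨ A i j = 1) ∧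
  (∀ i j j', A i j = 1 → A i j' = 1 → j = j') ∧
  (∀ i i' j, A i j = 1 → A i' j = 1 → i = i')

/-- Pseudo-echelon form: if rows `i < i'` contain nonzero entries in columns
`j` and `j'` respectively, then `j < j'`. -/
def IsPseudoEchelon {l k : ℕ} {R : Type*} [CommRing R]
    (A : Matrix (Fin l) (Fin k) R) : Prop :=
  ∀ i i' j j', i < i' → A i j ≠ 0 → A i' j' ≠ 0 → j < j'

/-- A permutation matrix: the 0–1 matrix of some permutation `σ`, with
entry 1 exactly in the positions `(σ j, j)`. -/
def IsPermMatrix {n : ℕ} {R : Type*} [CommRing R]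
    (S : Matrix (Fin n) (Fin n) R) : Prop :=
  ∃ σ : Equiv.Perm (Fin n), ∀ i j, S i j = if i = σ j then 1 else 0

/-- The matrix `[f]` associated to a partial equivalence (rook diagram)
`f : PEquiv (Fin k) (Fin l)`: the `(q, p)` entry is 1 if `f p = q` and 0
otherwise. -/
def rookMatrixOf {k l : ℕ} (R : Type*) [CommRing R]
    (f : PEquiv (Fin k) (Fin l)) : Matrix (Fin l) (Fin k) R :=
  fun q p => if f p = some q then 1 else 0

/-- A partial equivalence (rook diagram) is monotone (planar) if for all
`p, q` in its domain, `p < q` implies `f p < f q`. -/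
def IsMonotonePE {k l : ℕ} (f : PEquiv (Fin k) (Fin l)) : Prop :=
  ∀ p q i j, i ∈ f p → j ∈ f q → p < q → i < j

theorem monotone_trans_monotone {k l m : ℕ} (f : PEquiv (Fin k) (Fin l))
    (g : PEquiv (Fin l) (Fin m)) (hf : IsMonotonePE f) (hg : IsMonotonePE g) :
    IsMonotonePE (f.trans g) := by
  intro p q i j hi hj hpq
  rw [PEquiv.mem_trans] at hi hj
  obtain ⟨a, ha, hga⟩ := hi
  obtain ⟨b, hb, hgb⟩ := hj
  exact hg a b i j hga hgb (hf p q a b ha hb hpq)
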